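/- Kirszbraun's extension theorem: Let m, n be natural numbers, let L ≥ 0 be a real number, let S be a subset of ℝᵐ, and let f : S → ℝⁿ be an L-Lipschitz map, i.e. ‖f x − f y‖ ≤ L·‖x − y‖ for all x, y ∈ S (Euclidean norms). Then there exists an L-Lipschitz map F : ℝᵐ → ℝⁿ such that F agrees with f on S. -/

import Mathlib

open scoped RealInnerProductSpace
open Finset

private lemma kirsz_sum_identity {E G : Type*} [NormedAddCommGroup G]
    [InnerProductSpace ℝ G] (J : Finset E) (w : E → ℝ) (hw : ∑ z ∈ J, w z = 1)
    (p : E → G) (q : G) :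
    ∑ z ∈ J, ∑ z' ∈ J, w z * w z' * ‖p z - p z'‖ ^ 2
      = 2 * (∑ z ∈ J, w z * ‖p z - q‖ ^ 2) - 2 * ‖∑ z ∈ J, w z • (p z - q)‖ ^ 2 := by
  have hinner : ‖∑ z ∈ J, w z • (p z - q)‖ ^ 2
      = ∑ z ∈ J, ∑ z' ∈ J, w z * w z' * ⟪p z - q, p z' - q⟫ := by
    rw [← real_inner_self_eq_norm_sq, sum_inner]
    refine Finset.sum_congr rfl fun z _ => ?_
    rw [inner_sum]
    refine Finset.sum_congr rfl fun z' _ => ?_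
    rw [real_inner_smul_left, real_inner_smul_right]; ring
  have h1 : ∑ z ∈ J, ∑ z' ∈ J, w z * w z' * ‖p z - q‖ ^ 2
      = ∑ z ∈ J, w z * ‖p z - q‖ ^ 2 := by
    refine Finset.sum_congr rfl fun z _ => ?_
    have : ∀ z' ∈ J, w z * w z' * ‖p z - q‖ ^ 2 = w z' * (w z * ‖p z - q‖ ^ 2) := by
      intro z' _; ring
    rw [Finset.sum_congr rfl this, ← Finset.sum_mul, hw, one_mul]
  have h2 : ∑ z ∈ J, ∑ z' ∈ J, w z * w z' * ‖p z' - q‖ ^ 2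
      = ∑ z' ∈ J, w z' * ‖p z' - q‖ ^ 2 := by
    have : ∀ z ∈ J, ∑ z' ∈ J, w z * w z' * ‖p z' - q‖ ^ 2
        = w z * ∑ z' ∈ J, w z' * ‖p z' - q‖ ^ 2 := by
      intro z _; rw [Finset.mul_sum]; exact Finset.sum_congr rfl fun z' _ => by ring
    rw [Finset.sum_congr rfl this, ← Finset.sum_mul, hw, one_mul]
  have expand : ∀ z ∈ J, ∀ z' ∈ J, w z * w z' * ‖p z - p z'‖ ^ 2
      = w z * w z' * ‖p z - q‖ ^ 2 + w z * w z' * ‖p z' - q‖ ^ 2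
        - 2 * (w z * w z' * ⟪p z - q, p z' - q⟫) := by
    intro z _ z' _
    have hpt : p z - p z' = (p z - q) - (p z' - q) := by abel
    rw [hpt, norm_sub_sq_real]; ring
  calc ∑ z ∈ J, ∑ z' ∈ J, w z * w z' * ‖p z - p z'‖ ^ 2
      = ∑ z ∈ J, ∑ z' ∈ J, (w z * w z' * ‖p z - q‖ ^ 2 + w z * w z' * ‖p z' - q‖ ^ 2
          - 2 * (w z * w z' * ⟪p z - q, p z' - q⟫)) := by
        refine Finset.sum_congr rfl fun z hz => Finset.sum_congr rfl fun z' hz' => ?_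
        exact expand z hz z' hz'
    _ = (∑ z ∈ J, ∑ z' ∈ J, w z * w z' * ‖p z - q‖ ^ 2)
          + (∑ z ∈ J, ∑ z' ∈ J, w z * w z' * ‖p z' - q‖ ^ 2)
          - 2 * ∑ z ∈ J, ∑ z' ∈ J, w z * w z' * ⟪p z - q, p z' - q⟫ := by
        simp [Finset.sum_add_distrib, Finset.sum_sub_distrib, Finset.mul_sum]
    _ = 2 * (∑ z ∈ J, w z * ‖p z - q‖ ^ 2) - 2 * ‖∑ z ∈ J, w z • (p z - q)‖ ^ 2 := by
        rw [h1, h2, hinner]; ring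



section core

variable {E G : Type*} [NormedAddCommGroup E] [InnerProductSpace ℝ E]
  [NormedAddCommGroup G] [InnerProductSpace ℝ G] [FiniteDimensional ℝ G]

private lemma kirsz_one_point (L : ℝ) (hL : 0 < L) (T : Finset E) (g : E → G)
    (hg : ∀ a ∈ T, ∀ b ∈ T, ‖g a - g b‖ ≤ L * ‖a - b‖) (x : E) :
    ∃ y : G, ∀ a ∈ T, ‖y - g a‖ ≤ L * ‖x - a‖ := by
  classical
  rcases T.eq_empty_or_nonempty with rfl | hT
  · exact ⟨0, by simp⟩
  by_cases hx : x ∈ T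
  · exact ⟨g x, fun a ha => hg x hx a ha⟩
  -- all radii are positive
  set r : E → ℝ := fun a => L * ‖x - a‖ with hr
  have hrpos : ∀ a ∈ T, 0 < r a := by
    intro a ha
    have : x ≠ a := fun h => hx (h ▸ ha)
    exact mul_pos hL (norm_pos_iff.2 (sub_ne_zero.2 this))
  -- the function to minimize
  set h : E → G → ℝ := fun a y => ‖y - g a‖ ^ 2 / r a ^ 2 with hh
  set φ : G → ℝ := fun y => T.sup' hT (fun a => h a y) with hφ
  have hcont : Continuous φ := by
    apply Continuous.finset_sup'_apply hT
    intro a _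
    exact (((continuous_id.sub continuous_const).norm.pow 2).div_const _)
  have hφ_ge : ∀ a ∈ T, ∀ y, h a y ≤ φ y := fun a ha y => Finset.le_sup' (fun b => h b y) ha
  have hφ_nonneg : ∀ y, 0 ≤ φ y := by
    intro y
    obtain ⟨a, ha⟩ := hT
    exact le_trans (by positivity : (0:ℝ) ≤ h a y) (hφ_ge a ha y)
  -- existence of a global minimizer
  obtain ⟨a₀, ha₀⟩ := hT
  set M : ℝ := φ (g a₀) with hM
  have hM1 : (0:ℝ) ≤ M + 1 := by have := hφ_nonneg (g a₀); linarith
  set R : ℝ := r a₀ * Real.sqrt (M + 1) with hR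
  have hR0 : 0 ≤ R := mul_nonneg (hrpos a₀ ha₀).le (Real.sqrt_nonneg _)
  obtain ⟨ystar, hymem, hymin⟩ :=
    (isCompact_closedBall (g a₀) R).exists_isMinOn ⟨g a₀, Metric.mem_closedBall_self hR0⟩
      hcont.continuousOn
  have hglobal : ∀ y, φ ystar ≤ φ y := by
    intro y
    by_cases hy : y ∈ Metric.closedBall (g a₀) R
    · exact hymin hy
    · have h1 : φ ystar ≤ M := hymin (Metric.mem_closedBall_self hR0)
      have hRy : R < ‖y - g a₀‖ := by
        rw [Metric.mem_closedBall, dist_eq_norm] at hy; linarith [not_le.1 hy]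
      have h2' : R ^ 2 ≤ ‖y - g a₀‖ ^ 2 := pow_le_pow_left₀ hR0 hRy.le 2
      have h3 : R ^ 2 = (M + 1) * r a₀ ^ 2 := by
        rw [hR, mul_pow, Real.sq_sqrt hM1]; ring
      have key : M + 1 ≤ h a₀ y := by
        rw [hh, le_div_iff₀ (pow_pos (hrpos a₀ ha₀) 2)]
        linarith
      have := le_trans key (hφ_ge a₀ ha₀ y)
      linarith
  set μ : ℝ := φ ystar with hμ
  have hμ0 : 0 ≤ μ := hφ_nonneg ystar
  -- it suffices to show μ ≤ 1
  suffices hμ1 : μ ≤ 1 by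
    refine ⟨ystar, fun a ha => ?_⟩
    have h1 : h a ystar ≤ 1 := le_trans (hφ_ge a ha ystar) hμ1
    rw [hh, div_le_one (pow_pos (hrpos a ha) 2)] at h1
    exact (pow_le_pow_iff_left₀ (norm_nonneg _) (hrpos a ha).le two_ne_zero).1 h1
  -- active set
  set I : Finset E := T.filter (fun a => h a ystar = μ) with hI
  have hIne : I.Nonempty := by
    obtain ⟨a, ha, hae⟩ := Finset.exists_mem_eq_sup' ⟨a₀, ha₀⟩ (fun a => h a ystar)
    exact ⟨a, Finset.mem_filter.2 ⟨ha, hae.symm⟩⟩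
  have hImem : ∀ a ∈ I, a ∈ T ∧ h a ystar = μ := fun a ha => Finset.mem_filter.1 ha
  -- active equality in squared form
  have hactive : ∀ a ∈ I, ‖ystar - g a‖ ^ 2 = μ * r a ^ 2 := by
    intro a ha
    obtain ⟨haT, hae⟩ := hImem a ha
    rw [hh] at hae
    rw [div_eq_iff (pow_pos (hrpos a haT) 2).ne'] at hae
    exact hae
  -- claim: ystar lies in the convex hull of the active images
  set J : Finset G := I.image g with hJ
  have hJne : J.Nonempty := hIne.image g
  have hclaim : ystar ∈ convexHull ℝ (J : Set G) := by
    by_contra hcon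
    set K : Set G := convexHull ℝ (J : Set G) with hK
    have hKconv : Convex ℝ K := convex_convexHull ℝ _
    have hKcompact : IsCompact K := J.finite_toSet.isCompact_convexHull ℝ
    have hKne : K.Nonempty := by
      obtain ⟨z, hz⟩ := hJne
      exact ⟨z, subset_convexHull ℝ _ hz⟩
    obtain ⟨v, hvK, hvmin⟩ :=
      exists_norm_eq_iInf_of_complete_convex hKne (hKcompact.isClosed.isComplete) hKconv ystar
    have hvchar : ∀ w ∈ K, ⟪ystar - v, w - v⟫ ≤ 0 :=
      (norm_eq_iInf_iff_real_inner_le_zero hKconv hvK).1 hvmin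
    set d : G := ystar - v with hd
    have hdne : d ≠ 0 := by
      rw [hd, sub_ne_zero]
      exact fun hv => hcon (hv ▸ hvK)
    have hd2 : 0 < ‖d‖ ^ 2 := pow_pos (norm_pos_iff.2 hdne) 2
    -- for each active point, the inner product with d is at least ‖d‖²
    have hinner : ∀ z ∈ J, ‖d‖ ^ 2 ≤ ⟪ystar - z, d⟫ := by
      intro z hz
      have h1 : ⟪d, z - v⟫ ≤ 0 := hvchar z (subset_convexHull ℝ _ hz)
      have h2 : ystar - z = d + (v - z) := by rw [hd]; abel
      rw [h2, inner_add_left, real_inner_self_eq_norm_sq]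
      have h3 : ⟪v - z, d⟫ = -⟪d, z - v⟫ := by
        rw [real_inner_comm, show v - z = -(z - v) from by abel, inner_neg_right]
      rw [h3]; linarith
    -- eventually in 𝓝[>] 0, moving by t • d strictly decreases all values
    have hev : ∀ a ∈ T, ∀ᶠ t in nhdsWithin (0:ℝ) (Set.Ioi 0), h a (ystar - t • d) < μ := by
      intro a ha
      have hra := hrpos a ha
      by_cases hact : a ∈ I
      · -- active case
        have hzJ : g a ∈ J := Finset.mem_image_of_mem g hact
        have hval := hactive a hact
        have hid : ∀ t : ℝ, ‖ystar - t • d - g a‖ ^ 2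
            = ‖ystar - g a‖ ^ 2 - 2 * t * ⟪ystar - g a, d⟫ + t ^ 2 * ‖d‖ ^ 2 := by
          intro t
          have : ystar - t • d - g a = (ystar - g a) - t • d := by abel
          rw [this, norm_sub_sq_real, real_inner_smul_right, norm_smul, mul_pow]
          simp [abs_sq]
          ring
        filter_upwards [Ioo_mem_nhdsGT_of_mem (Set.mem_Ico.2 ⟨le_refl (0:ℝ), two_pos⟩)]
          with t ht
        obtain ⟨ht0, ht2⟩ := ht
        rw [hh, div_lt_iff₀ (pow_pos hra 2)]
        have hip := hinner (g a) hzJ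
        have hlt : ‖ystar - t • d - g a‖ ^ 2 < ‖ystar - g a‖ ^ 2 := by
          rw [hid t]
          have h4 : t ^ 2 * ‖d‖ ^ 2 - 2 * t * ‖d‖ ^ 2 < 0 := by
            nlinarith [mul_pos (mul_pos ht0 (sub_pos.2 ht2)) hd2]
          nlinarith [h4, mul_nonneg ht0.le (sub_nonneg.2 hip)]
        rw [hval] at hlt
        linarith
      · -- inactive case
        have hlt : h a ystar < μ := lt_of_le_of_ne (hφ_ge a ha ystar)
          (fun hiq => hact (Finset.mem_filter.2 ⟨ha, hiq⟩))
        have hcont2 : ContinuousAt (fun t : ℝ => h a (ystar - t • d)) 0 := by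
          apply Continuous.continuousAt
          apply Continuous.div_const
          apply Continuous.pow
          apply Continuous.norm
          exact (continuous_const.sub (continuous_id.smul continuous_const)).sub continuous_const
        have h0 : (fun t : ℝ => h a (ystar - t • d)) 0 < μ := by simpa using hlt
        have := Filter.Tendsto.eventually_lt_const h0 hcont2
        exact this.filter_mono nhdsWithin_le_nhds
    -- pick a single positive t
    have hall : ∀ᶠ t in nhdsWithin (0:ℝ) (Set.Ioi 0),
        ∀ a ∈ T, h a (ystar - t • d) < μ := (Filter.eventually_all_finset T).2 hev
    obtain ⟨t, htall, htmem⟩ := (hall.and (self_mem_nhdsWithin : Set.Ioi (0:ℝ) ∈ _)).exists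
    have hφlt : φ (ystar - t • d) < μ := by
      rw [hφ]
      exact (Finset.sup'_lt_iff ⟨a₀, ha₀⟩).2 fun a ha => htall a ha
    exact absurd (hglobal (ystar - t • d)) (not_le.2 hφlt)
  -- extract convex weights
  obtain ⟨w, hw0, hw1, hwc⟩ := (Finset.mem_convexHull).1 hclaim
  have hwsum : ∑ z ∈ J, w z • z = ystar := by
    rw [← hwc, Finset.centerMass_eq_of_sum_1 _ _ hw1]
    rfl
  -- choose preimages under g of the active images
  set α : G → E := fun z => if hz : ∃ a ∈ I, g a = z then hz.choose else x with hα
  have hαI : ∀ z ∈ J, α z ∈ I ∧ g (α z) = z := by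
    intro z hz
    obtain ⟨a, haI, hga⟩ := Finset.mem_image.1 hz
    have hex : ∃ a ∈ I, g a = z := ⟨a, haI, hga⟩
    rw [hα]
    simp only [dif_pos hex]
    exact hex.choose_spec
  have hαT : ∀ z ∈ J, α z ∈ T := fun z hz => (hImem _ ((hαI z hz).1)).1
  -- the two sum identities
  have hid1 := kirsz_sum_identity J w hw1 (fun z => z) ystar
  have hid2 := kirsz_sum_identity J w hw1 α x
  have hzero : ∑ z ∈ J, w z • (z - ystar) = 0 := by
    have : ∀ z ∈ J, w z • (z - ystar) = w z • z - w z • ystar := fun z _ => smul_sub _ _ _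
    rw [Finset.sum_congr rfl this, Finset.sum_sub_distrib, hwsum, ← Finset.sum_smul, hw1, one_smul,
      sub_self]
  rw [hzero, norm_zero] at hid1
  -- term-wise facts
  have hterm1 : ∀ z ∈ J, w z * ‖z - ystar‖ ^ 2 = μ * (w z * r (α z) ^ 2) := by
    intro z hz
    obtain ⟨hzI, hgz⟩ := hαI z hz
    have := hactive (α z) hzI
    rw [hgz, ← norm_sub_rev] at this
    rw [this]; ring
  have hsum1 : ∑ z ∈ J, ∑ z' ∈ J, w z * w z' * ‖z - z'‖ ^ 2
      = 2 * (μ * ∑ z ∈ J, w z * r (α z) ^ 2) := by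
    rw [hid1]
    rw [Finset.sum_congr rfl hterm1, ← Finset.mul_sum]
    ring
  have hsum2 : ∑ z ∈ J, ∑ z' ∈ J, w z * w z' * ‖z - z'‖ ^ 2
      ≤ 2 * ∑ z ∈ J, w z * r (α z) ^ 2 := by
    have step1 : ∑ z ∈ J, ∑ z' ∈ J, w z * w z' * ‖z - z'‖ ^ 2
        ≤ ∑ z ∈ J, ∑ z' ∈ J, w z * w z' * (L ^ 2 * ‖α z - α z'‖ ^ 2) := by
      refine Finset.sum_le_sum fun z hz => Finset.sum_le_sum fun z' hz' => ?_
      have hww : 0 ≤ w z * w z' := mul_nonneg (hw0 z hz) (hw0 z' hz')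
      refine mul_le_mul_of_nonneg_left ?_ hww
      have hLip := hg (α z) (hαT z hz) (α z') (hαT z' hz')
      rw [(hαI z hz).2, (hαI z' hz').2] at hLip
      calc ‖z - z'‖ ^ 2 ≤ (L * ‖α z - α z'‖) ^ 2 :=
            pow_le_pow_left₀ (norm_nonneg _) hLip 2
        _ = L ^ 2 * ‖α z - α z'‖ ^ 2 := by ring
    have step2 : ∑ z ∈ J, ∑ z' ∈ J, w z * w z' * (L ^ 2 * ‖α z - α z'‖ ^ 2)
        = L ^ 2 * ∑ z ∈ J, ∑ z' ∈ J, w z * w z' * ‖α z - α z'‖ ^ 2 := by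
      rw [Finset.mul_sum]
      refine Finset.sum_congr rfl fun z _ => ?_
      rw [Finset.mul_sum]
      exact Finset.sum_congr rfl fun z' _ => by ring
    have step3 : L ^ 2 * (∑ z ∈ J, ∑ z' ∈ J, w z * w z' * ‖α z - α z'‖ ^ 2)
        ≤ L ^ 2 * (2 * ∑ z ∈ J, w z * ‖α z - x‖ ^ 2) := by
      refine mul_le_mul_of_nonneg_left ?_ (by positivity)
      rw [hid2]
      have : 0 ≤ ‖∑ z ∈ J, w z • (α z - x)‖ ^ 2 := by positivity
      linarith
    have step4 : L ^ 2 * (2 * ∑ z ∈ J, w z * ‖α z - x‖ ^ 2)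
        = 2 * ∑ z ∈ J, w z * r (α z) ^ 2 := by
      rw [Finset.mul_sum, Finset.mul_sum, Finset.mul_sum]
      refine Finset.sum_congr rfl fun z _ => ?_
      rw [hr]
      rw [← norm_sub_rev x (α z)]
      ring
    calc ∑ z ∈ J, ∑ z' ∈ J, w z * w z' * ‖z - z'‖ ^ 2
        ≤ ∑ z ∈ J, ∑ z' ∈ J, w z * w z' * (L ^ 2 * ‖α z - α z'‖ ^ 2) := step1
      _ = L ^ 2 * ∑ z ∈ J, ∑ z' ∈ J, w z * w z' * ‖α z - α z'‖ ^ 2 := step2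
      _ ≤ L ^ 2 * (2 * ∑ z ∈ J, w z * ‖α z - x‖ ^ 2) := step3
      _ = 2 * ∑ z ∈ J, w z * r (α z) ^ 2 := step4
  -- the weighted sum of squared radii is positive
  have hpos : 0 < ∑ z ∈ J, w z * r (α z) ^ 2 := by
    obtain ⟨z₀, hz₀, hwz₀⟩ : ∃ z ∈ J, 0 < w z := by
      by_contra hcon
      push_neg at hcon
      have : ∑ z ∈ J, w z ≤ 0 := Finset.sum_nonpos fun z hz => hcon z hz
      rw [hw1] at this; linarith
    have hterm : 0 < w z₀ * r (α z₀) ^ 2 :=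
      mul_pos hwz₀ (pow_pos (hrpos _ (hαT z₀ hz₀)) 2)
    refine lt_of_lt_of_le hterm
      (Finset.single_le_sum (f := fun z => w z * r (α z) ^ 2) (fun z hz => ?_) hz₀)
    exact mul_nonneg (hw0 z hz) (by positivity)
  -- conclude μ ≤ 1
  have : 2 * (μ * ∑ z ∈ J, w z * r (α z) ^ 2) ≤ 2 * ∑ z ∈ J, w z * r (α z) ^ 2 := by
    rw [← hsum1]; exact hsum2
  nlinarith [hpos]



private lemma kirsz_extend_finset [DecidableEq E] (L : ℝ) (hL : 0 < L) (A B : Finset E) (g : E → G)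
    (hg : ∀ a ∈ A, ∀ b ∈ A, ‖g a - g b‖ ≤ L * ‖a - b‖) :
    ∃ g' : E → G, (∀ a ∈ A, g' a = g a) ∧
      ∀ p ∈ A ∪ B, ∀ q ∈ A ∪ B, ‖g' p - g' q‖ ≤ L * ‖p - q‖ := by
  classical
  induction B using Finset.cons_induction with
  | empty => exact ⟨g, fun a _ => rfl, by simpa using hg⟩
  | cons x B hxB ih =>
    obtain ⟨g₁, hg₁A, hg₁⟩ := ih
    have hmem : ∀ p, p ∈ A ∪ Finset.cons x B hxB ↔ p = x ∨ p ∈ A ∪ B := by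
      intro p
      simp only [Finset.cons_eq_insert, Finset.union_insert, Finset.mem_insert]
    by_cases hxAB : x ∈ A ∪ B
    · refine ⟨g₁, hg₁A, fun p hp q hq => ?_⟩
      have hp' : p ∈ A ∪ B := by
        rcases (hmem p).1 hp with rfl | h
        exacts [hxAB, h]
      have hq' : q ∈ A ∪ B := by
        rcases (hmem q).1 hq with rfl | h
        exacts [hxAB, h]
      exact hg₁ p hp' q hq'
    · obtain ⟨y, hy⟩ := kirsz_one_point L hL (A ∪ B) g₁ hg₁ x
      refine ⟨Function.update g₁ x y, fun a ha => ?_, fun p hp q hq => ?_⟩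
      · have hax : a ≠ x := fun h => hxAB (Finset.mem_union_left B (h ▸ ha))
        rw [Function.update_of_ne hax]
        exact hg₁A a ha
      · have hux : Function.update g₁ x y x = y := Function.update_self x y g₁
        have hune : ∀ z ∈ A ∪ B, Function.update g₁ x y z = g₁ z := by
          intro z hz
          refine Function.update_of_ne (fun h : z = x => hxAB ?_) y g₁
          rw [← h]; exact hz
        obtain hp' | hp' := (hmem p).1 hp <;> obtain hq' | hq' := (hmem q).1 hq
        · rw [hp', hq']; simp
        · rw [hp', hux, hune q hq']
          exact hy q hq'
        · rw [hq', hux, hune p hp', norm_sub_rev, norm_sub_rev p x]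
          exact hy p hp'
        · rw [hune p hp', hune q hq']
          exact hg₁ p hp' q hq'

end core

/-- Kirszbraun's extension theorem: every `L`-Lipschitz map `f : S → ℝⁿ`, `S ⊆ ℝᵐ`,
extends to an `L`-Lipschitz map `F : ℝᵐ → ℝⁿ`. -/
theorem kirszbraun (m n : ℕ) (L : ℝ) (hL : 0 ≤ L)
    (S : Set (EuclideanSpace ℝ (Fin m)))
    (f : EuclideanSpace ℝ (Fin m) → EuclideanSpace ℝ (Fin n))
    (hf : ∀ x ∈ S, ∀ y ∈ S, ‖f x - f y‖ ≤ L * ‖x - y‖) :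
    ∃ F : EuclideanSpace ℝ (Fin m) → EuclideanSpace ℝ (Fin n),
      (∀ x ∈ S, F x = f x) ∧ (∀ x y, ‖F x - F y‖ ≤ L * ‖x - y‖) := by
  classical
  rcases S.eq_empty_or_nonempty with rfl | ⟨a₀, ha₀⟩
  · exact ⟨fun _ => 0, by simp, fun x y => by
      simp only [sub_self, norm_zero]
      positivity⟩
  rcases eq_or_lt_of_le hL with hL0 | hLpos
  · -- degenerate case L = 0
    refine ⟨fun _ => f a₀, fun x hx => ?_, fun x y => by
      simp only [sub_self, norm_zero, ← hL0, zero_mul, le_refl]⟩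
    have h1 : ‖f x - f a₀‖ ≤ 0 := by
      have := hf x hx a₀ ha₀
      rw [← hL0, zero_mul] at this
      exact this
    have h2 : f x - f a₀ = 0 := norm_le_zero_iff.1 h1
    rw [sub_eq_zero] at h2
    exact h2.symm
  -- main case: L > 0
  set K : Set (EuclideanSpace ℝ (Fin m) → EuclideanSpace ℝ (Fin n)) := {F | ∀ x, F x ∈ Metric.closedBall (f a₀) (L * ‖x - a₀‖)} with hK
  have hKc : IsCompact K := by
    have hKeq : K = Set.pi Set.univ (fun x => Metric.closedBall (f a₀) (L * ‖x - a₀‖)) := by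
      ext F
      simp [Set.mem_pi, hK]
    rw [hKeq]
    exact isCompact_univ_pi fun x => isCompact_closedBall _ _
  set C : (EuclideanSpace ℝ (Fin m) × EuclideanSpace ℝ (Fin m)) ⊕ (EuclideanSpace ℝ (Fin m)) → Set (EuclideanSpace ℝ (Fin m) → EuclideanSpace ℝ (Fin n)) :=
    Sum.elim (fun p => {F | ‖F p.1 - F p.2‖ ≤ L * ‖p.1 - p.2‖})
      (fun a => {F | a ∈ S → F a = f a}) with hC
  have hCc : ∀ i, IsClosed (C i) := by
    rintro (⟨x, y⟩ | a)
    · exact isClosed_le (((continuous_apply x).sub (continuous_apply y)).norm)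
        continuous_const
    · by_cases haS : a ∈ S
      · have : C (Sum.inr a) = {F : EuclideanSpace ℝ (Fin m) → EuclideanSpace ℝ (Fin n) | F a = f a} := by
          ext F
          simp [hC, haS]
        rw [this]
        exact isClosed_eq (continuous_apply a) continuous_const
      · have : C (Sum.inr a) = Set.univ := by
          ext F
          simp [hC, haS]
        rw [this]
        exact isClosed_univ
  have hne : (K ∩ ⋂ i, C i).Nonempty := by
    by_contra hcon
    rw [Set.not_nonempty_iff_eq_empty] at hcon
    obtain ⟨t, ht⟩ := hKc.elim_finite_subfamily_closed C hCc hcon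
    -- build a witness satisfying the finitely many constraints
    set P : Finset (EuclideanSpace ℝ (Fin m)) :=
      (t.biUnion (fun i => Sum.elim (fun p => {p.1, p.2}) (fun a => {a}) i)) ∪ {a₀} with hP
    set A : Finset (EuclideanSpace ℝ (Fin m)) := P.filter (· ∈ S) with hA
    set B : Finset (EuclideanSpace ℝ (Fin m)) := P.filter (· ∉ S) with hB
    have hAB : A ∪ B = P := Finset.filter_union_filter_not_eq _ P
    have ha₀P : a₀ ∈ P := Finset.mem_union_right _ (Finset.mem_singleton_self a₀)
    have ha₀A : a₀ ∈ A := Finset.mem_filter.2 ⟨ha₀P, ha₀⟩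
    have hAS : ∀ a ∈ A, a ∈ S := fun a ha => (Finset.mem_filter.1 ha).2
    have hfA : ∀ a ∈ A, ∀ b ∈ A, ‖f a - f b‖ ≤ L * ‖a - b‖ :=
      fun a ha b hb => hf a (hAS a ha) b (hAS b hb)
    obtain ⟨g', hg'A, hg'lip⟩ := kirsz_extend_finset L hLpos A B f hfA
    have hg'a₀ : g' a₀ = f a₀ := hg'A a₀ ha₀A
    set F₀ : EuclideanSpace ℝ (Fin m) → EuclideanSpace ℝ (Fin n) := fun z => if z ∈ P then g' z else f a₀ with hF₀
    have hF₀P : ∀ z ∈ P, F₀ z = g' z := by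
      intro z hz
      simp only [hF₀, if_pos hz]
    have hF₀lip : ∀ p ∈ P, ∀ q ∈ P, ‖F₀ p - F₀ q‖ ≤ L * ‖p - q‖ := by
      intro p hp q hq
      rw [hF₀P p hp, hF₀P q hq]
      exact hg'lip p (hAB ▸ hp) q (hAB ▸ hq)
    have hF₀K : F₀ ∈ K := by
      intro z
      rw [Metric.mem_closedBall, dist_eq_norm]
      by_cases hz : z ∈ P
      · rw [hF₀P z hz, ← hg'a₀]
        exact hg'lip z (hAB ▸ hz) a₀ (hAB ▸ ha₀P)
      · simp only [hF₀, if_neg hz, sub_self, norm_zero]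
        positivity
    have hmemP : ∀ i ∈ t, ∀ z ∈ (Sum.elim (fun p : EuclideanSpace ℝ (Fin m) × EuclideanSpace ℝ (Fin m) => ({p.1, p.2} : Finset (EuclideanSpace ℝ (Fin m))))
        (fun a => {a}) i), z ∈ P := by
      intro i hi z hz
      exact Finset.mem_union_left _ (Finset.mem_biUnion.2 ⟨i, hi, hz⟩)
    have hF₀C : ∀ i ∈ t, F₀ ∈ C i := by
      rintro (⟨x, y⟩ | a) hi
      · have hxP : x ∈ P := hmemP _ hi x (by simp)
        have hyP : y ∈ P := hmemP _ hi y (by simp)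
        exact hF₀lip x hxP y hyP
      · intro haS
        have haP : a ∈ P := hmemP _ hi a (by simp)
        have haA : a ∈ A := Finset.mem_filter.2 ⟨haP, haS⟩
        rw [hF₀P a haP]
        exact hg'A a haA
    have : F₀ ∈ K ∩ ⋂ i ∈ t, C i :=
      ⟨hF₀K, Set.mem_iInter₂.2 hF₀C⟩
    rw [ht] at this
    exact this
  obtain ⟨F, hFK, hFC⟩ := hne
  rw [Set.mem_iInter] at hFC
  refine ⟨F, fun x hx => hFC (Sum.inr x) hx, fun x y => hFC (Sum.inl (x, y))⟩
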